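/- Define h : (0,∞) → ℝ by h(x) = (log x)² for 0 < x < e and h(x) = 2x/e − 1 for x ≥ e. Then h is convex on (0,∞) and (log x)² ≤ h(x) for all x > 0. -/

import Mathlib

/-- The smallest convex function dominating `x ↦ (log x)²` on `(0, ∞)`:
`h(x) = (log x)²` for `x < e` and `h(x) = 2x/e − 1` for `x ≥ e`. -/
noncomputable def hfun (x : ℝ) : ℝ :=
  if x < Real.exp 1 then (Real.log x) ^ 2 else 2 * x / Real.exp 1 - 1

private lemma epos : (0:ℝ) < Real.exp 1 := Real.exp_pos 1

private lemma log_le_div_e {x : ℝ} (hx : 0 < x) : Real.log x ≤ x / Real.exp 1 := by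
  have h := Real.log_le_sub_one_of_pos (div_pos hx epos)
  rw [Real.log_div hx.ne' epos.ne', Real.log_exp] at h
  linarith

/-- `log t / t` is monotone on `(0, e]`. -/
private lemma mono_log_div : MonotoneOn (fun t : ℝ => Real.log t / t)
    (Set.Ioc (0:ℝ) (Real.exp 1)) := by
  have hint : interior (Set.Ioc (0:ℝ) (Real.exp 1)) = Set.Ioo 0 (Real.exp 1) :=
    interior_Ioc
  apply monotoneOn_of_deriv_nonneg (convex_Ioc _ _)
  · apply ContinuousOn.div
    · exact Real.continuousOn_log.mono (by intro t ht; exact ht.1.ne' )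
    · exact continuousOn_id
    · intro t ht; exact ht.1.ne'
  · rw [hint]
    intro t ht
    exact (((Real.hasDerivAt_log ht.1.ne').div (hasDerivAt_id t)
      ht.1.ne')).differentiableAt.differentiableWithinAt
  · rw [hint]
    intro t ht
    have hd : HasDerivAt (fun t : ℝ => Real.log t / t)
        ((t⁻¹ * t - Real.log t * 1) / t ^ 2) t :=
      (Real.hasDerivAt_log ht.1.ne').div (hasDerivAt_id t) ht.1.ne'
    rw [hd.deriv]
    have h1 : Real.log t ≤ 1 := by
      have := Real.log_le_log ht.1 ht.2.le
      rwa [Real.log_exp] at this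
    have ht0 := ht.1
    have h2 : t⁻¹ * t = 1 := inv_mul_cancel₀ ht0.ne'
    rw [h2]
    apply div_nonneg
    · linarith
    · positivity

/-- The pointwise derivative of `hfun` on `(0,∞)`. -/
noncomputable def gfun (x : ℝ) : ℝ :=
  if x < Real.exp 1 then 2 * Real.log x / x else 2 / Real.exp 1

private lemma hasDerivAt_hfun {x : ℝ} (hx : 0 < x) : HasDerivAt hfun (gfun x) x := by
  have hlin : ∀ t : ℝ, HasDerivAt (fun t : ℝ => 2 * t / Real.exp 1 - 1)
      (2 / Real.exp 1) t := by
    intro t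
    have : HasDerivAt (fun t : ℝ => 2 * t / Real.exp 1 - 1) (2 * 1 / Real.exp 1) t :=
      (((hasDerivAt_id t).const_mul 2).div_const _).sub_const 1
    simpa using this
  have hlog : ∀ t : ℝ, 0 < t → HasDerivAt (fun t : ℝ => (Real.log t) ^ 2)
      (2 * Real.log t / t) t := by
    intro t ht
    have : HasDerivAt (fun t : ℝ => (Real.log t) ^ 2) _ t := (Real.hasDerivAt_log ht.ne').pow 2
    simpa [mul_comm, mul_assoc, div_eq_mul_inv, mul_left_comm] using this
  rcases lt_trichotomy x (Real.exp 1) with h | h | h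
  · have hev : hfun =ᶠ[nhds x] fun t => (Real.log t) ^ 2 := by
      filter_upwards [Iio_mem_nhds h] with t ht
      simp [hfun, Set.mem_Iio.mp ht]
    rw [gfun, if_pos h]
    exact (hlog x hx).congr_of_eventuallyEq hev
  · subst h
    rw [gfun, if_neg (lt_irrefl _)]
    have hleft : HasDerivWithinAt hfun (2 / Real.exp 1)
        (Set.Iic (Real.exp 1)) (Real.exp 1) := by
      have hEq : Set.EqOn hfun (fun t => (Real.log t) ^ 2) (Set.Iic (Real.exp 1)) := by
        intro t ht
        rcases lt_or_eq_of_le (Set.mem_Iic.mp ht) with h' | h'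
        · simp [hfun, h']
        · subst h'
          have h2 : (2:ℝ) * Real.exp 1 / Real.exp 1 = 2 := by field_simp
          norm_num [hfun, Real.log_exp, h2]
      have hd : HasDerivWithinAt (fun t => (Real.log t) ^ 2) (2 / Real.exp 1)
          (Set.Iic (Real.exp 1)) (Real.exp 1) := by
        have := ((hlog (Real.exp 1) epos).hasDerivWithinAt
          (s := Set.Iic (Real.exp 1)))
        simpa [Real.log_exp] using this
      exact hd.congr hEq (hEq (Set.mem_Iic.mpr le_rfl))
    have hright : HasDerivWithinAt hfun (2 / Real.exp 1)
        (Set.Ici (Real.exp 1)) (Real.exp 1) := by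
      have hEq : Set.EqOn hfun (fun t => 2 * t / Real.exp 1 - 1)
          (Set.Ici (Real.exp 1)) := by
        intro t ht
        have : ¬ t < Real.exp 1 := not_lt.mpr ht
        simp [hfun, this]
      exact ((hlin _).hasDerivWithinAt).congr hEq (hEq (Set.mem_Ici.mpr le_rfl))
    have := hleft.union hright
    rwa [Set.Iic_union_Ici, hasDerivWithinAt_univ] at this
  · have hev : hfun =ᶠ[nhds x] fun t => 2 * t / Real.exp 1 - 1 := by
      filter_upwards [Ioi_mem_nhds h] with t ht
      simp [hfun, not_lt.mpr (le_of_lt (Set.mem_Ioi.mp ht))]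
    rw [gfun, if_neg (not_lt.mpr h.le)]
    exact (hlin x).congr_of_eventuallyEq hev

private lemma gfun_mono : MonotoneOn gfun (Set.Ioi (0:ℝ)) := by
  intro x hx y hy hxy
  simp only [Set.mem_Ioi] at hx hy
  have key : ∀ t : ℝ, 0 < t → t ≤ Real.exp 1 →
      2 * Real.log t / t ≤ 2 / Real.exp 1 := by
    intro t ht hte
    have h2 : Real.log t / t ≤ Real.log (Real.exp 1) / Real.exp 1 :=
      mono_log_div ⟨ht, hte⟩ ⟨epos, le_rfl⟩ hte
    rw [Real.log_exp] at h2
    calc 2 * Real.log t / t = 2 * (Real.log t / t) := by ring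
      _ ≤ 2 * (1 / Real.exp 1) := by linarith
      _ = 2 / Real.exp 1 := by ring
  by_cases hye : y < Real.exp 1
  · have hxe : x < Real.exp 1 := lt_of_le_of_lt hxy hye
    rw [gfun, gfun, if_pos hxe, if_pos hye]
    have h2 : Real.log x / x ≤ Real.log y / y :=
      mono_log_div ⟨hx, hxe.le⟩ ⟨hy, hye.le⟩ hxy
    calc 2 * Real.log x / x = 2 * (Real.log x / x) := by ring
      _ ≤ 2 * (Real.log y / y) := by linarith
      _ = 2 * Real.log y / y := by ring
  · rw [gfun, gfun, if_neg hye]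
    by_cases hxe : x < Real.exp 1
    · rw [if_pos hxe]
      exact key x hx hxe.le
    · rw [if_neg hxe]

private lemma hfun_convex : ConvexOn ℝ (Set.Ioi (0:ℝ)) hfun := by
  have hint : interior (Set.Ioi (0:ℝ)) = Set.Ioi 0 := interior_Ioi
  apply MonotoneOn.convexOn_of_deriv (convex_Ioi 0)
  · intro x hx
    exact (hasDerivAt_hfun hx).continuousAt.continuousWithinAt
  · rw [hint]
    intro x hx
    exact (hasDerivAt_hfun hx).differentiableAt.differentiableWithinAt
  · rw [hint]
    have : Set.EqOn (deriv hfun) gfun (Set.Ioi 0) := by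
      intro x hx
      exact (hasDerivAt_hfun hx).deriv
    exact gfun_mono.congr this.symm

private lemma hfun_dominates : ∀ x : ℝ, 0 < x → (Real.log x) ^ 2 ≤ hfun x := by
  intro x hx
  by_cases hxe : x < Real.exp 1
  · simp [hfun, hxe]
  · rw [hfun, if_neg hxe]
    push_neg at hxe
    -- show (log x)^2 ≤ 2x/e - 1 for x ≥ e via monotonicity of ψ on [e,∞)
    set f : ℝ → ℝ := fun t => 2 * t / Real.exp 1 - 1 - (Real.log t) ^ 2 with hf
    have hd : ∀ t : ℝ, 0 < t →
        HasDerivAt f (2 / Real.exp 1 - 2 * Real.log t / t) t := by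
      intro t ht
      have h1 : HasDerivAt (fun t : ℝ => 2 * t / Real.exp 1 - 1) (2 / Real.exp 1) t := by
        have : HasDerivAt (fun t : ℝ => 2 * t / Real.exp 1 - 1) (2 * 1 / Real.exp 1) t :=
          (((hasDerivAt_id t).const_mul 2).div_const _).sub_const 1
        simpa using this
      have h2 : HasDerivAt (fun t : ℝ => (Real.log t) ^ 2) (2 * Real.log t / t) t := by
        have : HasDerivAt (fun t : ℝ => (Real.log t) ^ 2) _ t := (Real.hasDerivAt_log ht.ne').pow 2
        simpa [mul_comm, mul_assoc, div_eq_mul_inv, mul_left_comm] using this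
      exact h1.sub h2
    have hmono : MonotoneOn f (Set.Ici (Real.exp 1)) := by
      apply monotoneOn_of_deriv_nonneg (convex_Ici _)
      · intro t ht
        have ht0 : 0 < t := lt_of_lt_of_le epos ht
        exact (hd t ht0).continuousAt.continuousWithinAt
      · rw [interior_Ici]
        intro t ht
        have ht0 : 0 < t := lt_trans epos ht
        exact (hd t ht0).differentiableAt.differentiableWithinAt
      · rw [interior_Ici]
        intro t ht
        have ht0 : 0 < t := lt_trans epos (ht : Real.exp 1 < t)
        rw [(hd t ht0).deriv]
        have hlog : Real.log t ≤ t / Real.exp 1 := log_le_div_e ht0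
        have hle : Real.log t * Real.exp 1 ≤ t := (le_div_iff₀ epos).mp hlog
        have h1 : 2 * Real.log t / t ≤ 2 / Real.exp 1 := by
          rw [div_le_div_iff₀ ht0 epos]
          nlinarith [epos]
        linarith
    have := hmono (Set.mem_Ici.mpr le_rfl) (Set.mem_Ici.mpr hxe) hxe
    have hfe : f (Real.exp 1) = 0 := by
      have h2 : (2:ℝ) * Real.exp 1 / Real.exp 1 = 2 := by field_simp
      norm_num [hf, Real.log_exp, h2]
    rw [hfe] at this
    have hfx : 0 ≤ 2 * x / Real.exp 1 - 1 - Real.log x ^ 2 := this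
    linarith

theorem statement12 :
    ConvexOn ℝ (Set.Ioi (0:ℝ)) hfun ∧ ∀ x : ℝ, 0 < x → (Real.log x) ^ 2 ≤ hfun x :=
  ⟨hfun_convex, hfun_dominates⟩
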